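/- Let M be a real symmetric N×N matrix, η > 0, and let v₁, …, v_k be orthonormal vectors such that applying Gram-Schmidt orthonormalization to (v₁ + ηMv₁, …, v_k + ηMv_k) returns (v₁, …, v_k) again. Then each v_i is an eigenvector of M. -/

import Mathlib

open Matrix Submodule RealInnerProductSpace

theorem stmt_4 (N k : ℕ) (M : Matrix (Fin N) (Fin N) ℝ) (hM : M.IsSymm)
    (η : ℝ) (hη : 0 < η)
    (v : Fin k → EuclideanSpace ℝ (Fin N))
    (hortho : Orthonormal ℝ v)
    (hfix : @InnerProductSpace.gramSchmidtNormed ℝ (EuclideanSpace ℝ (Fin N)) _ _ _ (Fin k) _ _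
        (inferInstance : WellFoundedLT (Fin k))
        (fun i => v i + η • (WithLp.equiv 2 (Fin N → ℝ)).symm (M.mulVec (v i))) = v) :
    ∀ i, ∃ μ : ℝ, M.mulVec (v i) = μ • (v i : Fin N → ℝ) := by
  set e := WithLp.equiv 2 (Fin N → ℝ)
  set w : Fin k → EuclideanSpace ℝ (Fin N) :=
    fun i => v i + η • e.symm (M.mulVec (v i)) with hw
  set x : Fin k → EuclideanSpace ℝ (Fin N) := fun i => e.symm (M.mulVec (v i)) with hx
  have hfix' : @InnerProductSpace.gramSchmidtNormed ℝ (EuclideanSpace ℝ (Fin N)) _ _ _ (Fin k) _ _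
      (inferInstance : WellFoundedLT (Fin k)) w = v := hfix
  -- spans agree
  have hspan : ∀ i : Fin k, span ℝ (w '' Set.Iic i) = span ℝ (v '' Set.Iic i) := by
    intro i
    rw [← hfix',
      @InnerProductSpace.span_gramSchmidtNormed ℝ (EuclideanSpace ℝ (Fin N)) _ _ _ (Fin k) _ _
        (inferInstance : WellFoundedLT (Fin k)) w (Set.Iic i),
      @InnerProductSpace.span_gramSchmidt_Iic ℝ (EuclideanSpace ℝ (Fin N)) _ _ _ (Fin k) _ _
        (inferInstance : WellFoundedLT (Fin k)) w i]
  -- x i ∈ span (v '' Iic i)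
  have hmem : ∀ i : Fin k, x i ∈ span ℝ (v '' Set.Iic i) := by
    intro i
    have hwi : w i ∈ span ℝ (v '' Set.Iic i) := by
      rw [← hspan i]; exact subset_span ⟨i, Set.mem_Iic.2 le_rfl, rfl⟩
    have hvi : v i ∈ span ℝ (v '' Set.Iic i) :=
      subset_span ⟨i, Set.mem_Iic.2 le_rfl, rfl⟩
    have : x i = η⁻¹ • (w i - v i) := by
      rw [hw, hx]; simp [smul_smul, inv_mul_cancel₀ hη.ne']
    rw [this]
    exact smul_mem _ _ (sub_mem hwi hvi)
  -- inner products
  have hinner : ∀ i j : Fin k, (inner ℝ (v j) ( x i) : ℝ) = (inner ℝ (x j) ( v i) : ℝ) := by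
    intro i j
    simp only [hx]
    have h1 : ∀ a b : Fin N → ℝ, (inner ℝ (e.symm a) ( e.symm b) : ℝ) = a ⬝ᵥ b := by
      intro a b
      simp only [PiLp.inner_apply, RCLike.inner_apply, dotProduct, conj_trivial]
      exact Finset.sum_congr rfl fun _ _ => mul_comm _ _
    have h2 : (inner ℝ ((v j : EuclideanSpace ℝ (Fin N))) ( e.symm (M.mulVec (v i))) : ℝ)
        = (v j : Fin N → ℝ) ⬝ᵥ M.mulVec (v i) := by
      have := h1 (e (v j)) (M.mulVec (v i))
      simpa [e] using this
    have h3 : (inner ℝ (e.symm (M.mulVec (v j))) ( (v i : EuclideanSpace ℝ (Fin N))) : ℝ)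
        = M.mulVec (v j) ⬝ᵥ (v i : Fin N → ℝ) := by
      have := h1 (M.mulVec (v j)) (e (v i))
      simpa [e] using this
    rw [h2, h3, Matrix.dotProduct_mulVec, ← Matrix.mulVec_transpose, hM.eq]
  -- zero lemma
  have hzero : ∀ (s : Set (Fin k)) (y : EuclideanSpace ℝ (Fin N)),
      y ∈ span ℝ (v '' s) → (∀ j, (inner ℝ (v j) ( y) : ℝ) = 0) → y = 0 := by
    intro s y hy h
    have hky : ∀ z ∈ span ℝ (v '' s), (inner ℝ z y : ℝ) = 0 := by
      intro z hz
      induction hz using Submodule.span_induction with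
      | mem z hz =>
        obtain ⟨j, _, rfl⟩ := hz
        exact h j
      | zero => simp
      | add a b _ _ ha hb => rw [inner_add_left, ha, hb, add_zero]
      | smul c a _ ha => rw [real_inner_smul_left, ha, mul_zero]
    exact inner_self_eq_zero.mp (hky y hy)
  -- off-diagonal inner vanishes
  have hoff : ∀ i j : Fin k, j ≠ i → (inner ℝ (v j) ( x i) : ℝ) = 0 := by
    have key : ∀ i j : Fin k, i < j → (inner ℝ (v j) ( x i) : ℝ) = 0 := by
      intro i j hij
      -- x i ∈ span (v '' Iic i), v j orthogonal to all of those
      have : ∀ z ∈ span ℝ (v '' Set.Iic i), (inner ℝ (v j) ( z) : ℝ) = 0 := by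
        intro z hz
        induction hz using Submodule.span_induction with
        | mem z hz =>
          obtain ⟨l, hl, rfl⟩ := hz
          exact hortho.2 (fun h => absurd (h ▸ hij) (not_lt.2 (h ▸ hl)))
        | zero => simp
        | add a b _ _ ha hb => rw [inner_add_right, ha, hb, add_zero]
        | smul c a _ ha => rw [inner_smul_right, ha, mul_zero]
      exact this _ (hmem i)
    intro i j hji
    rcases lt_or_gt_of_ne hji with h | h
    · -- j < i : use symmetry
      rw [hinner i j]
      have : ∀ z ∈ span ℝ (v '' Set.Iic j), (inner ℝ (z) ( v i) : ℝ) = 0 := by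
        intro z hz
        induction hz using Submodule.span_induction with
        | mem z hz =>
          obtain ⟨l, hl, rfl⟩ := hz
          have : l ≠ i := fun hli => absurd (hli ▸ hl) (not_le.2 h)
          exact hortho.2 this
        | zero => simp
        | add a b _ _ ha hb => rw [inner_add_left, ha, hb, add_zero]
        | smul c a _ ha => rw [inner_smul_left, ha, mul_zero]
      exact this _ (hmem j)
    · exact key i j h
  -- conclude
  intro i
  refine ⟨(inner ℝ (v i) ( x i) : ℝ), ?_⟩
  set μ := (inner ℝ (v i) ( x i) : ℝ)
  have hy : x i - μ • v i = 0 := by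
    apply hzero (Set.Iic i)
    · exact sub_mem (hmem i) (smul_mem _ _ (subset_span ⟨i, Set.mem_Iic.2 le_rfl, rfl⟩))
    · intro j
      rw [inner_sub_right, inner_smul_right]
      by_cases hji : j = i
      · subst hji
        have h1 : (inner ℝ (v j) (v j) : ℝ) = 1 := by
          rw [real_inner_self_eq_norm_sq, hortho.1 j]; norm_num
        rw [h1]; ring
      · rw [hoff i j hji, hortho.2 hji]; ring
  have hxi : x i = μ • v i := by
    have := sub_eq_zero.mp hy; exact this
  -- transfer back to mulVec
  have : e (x i) = e (μ • v i) := by rw [hxi]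
  simpa [hx, e] using this
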